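/- arXiv:2212.03142 — 3 statements merged into one kernel-verified Lean document; each statement's English description precedes it below -/
import Mathlib

section
/- Let w be a complex number that is algebraic over ℚ. If the minimal polynomial of w over ℚ has a complex root β with |β| ≥ 2, then the set of irreducible λ-quiddities over ⟨w⟩ is exactly {(0,kw,0,−kw) : k ∈ ℤ} ∪ {(kw,0,−kw,0) : k ∈ ℤ}. -/
open Matrix Polynomial

noncomputable section

/-- The elementary matrix [[a, -1], [1, 0]]. -/
def matE (a : ℂ) : Matrix (Fin 2) (Fin 2) ℂ := !![a, -1; 1, 0]

/-- M_n(a_1, …, a_n) = matE a_n * matE a_{n-1} * ⋯ * matE a_1, for the list [a_1, …, a_n]. -/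
def Mlist (l : List ℂ) : Matrix (Fin 2) (Fin 2) ℂ := (l.reverse.map matE).prod

/-- A λ-quiddity over R : a nonempty tuple of elements of R with M_n(a_1,…,a_n) = ±Id. -/
def IsQuiddity (R : Set ℂ) (l : List ℂ) : Prop :=
  l ≠ [] ∧ (∀ x ∈ l, x ∈ R) ∧ (Mlist l = 1 ∨ Mlist l = -1)

/-- (a_1,…,a_n) ⊕ (b_1,…,b_m) := (a_1+b_m, a_2,…,a_{n-1}, a_n+b_1, b_2,…,b_{m-1}). -/
def oplus (a b : List ℂ) : List ℂ :=
  (a.headI + b.getLastD 0) ::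
    (a.tail.dropLast ++ (a.getLastD 0 + b.headI) :: b.tail.dropLast)

/-- b is obtained from a by a cyclic permutation of a or of the reversal of a. -/
def CyclicEquiv (a b : List ℂ) : Prop :=
  (∃ k, b = a.rotate k) ∨ (∃ k, b = a.reverse.rotate k)

/-- A λ-quiddity c over R is reducible if c ∼ (a_1,…,a_m) ⊕ (b_1,…,b_l) with
(a_1,…,a_m) a tuple of elements of R, (b_1,…,b_l) a λ-quiddity over R, m ≥ 3 and l ≥ 3. -/
def ReducibleQuiddity (R : Set ℂ) (c : List ℂ) : Prop :=
  ∃ a b : List ℂ, (∀ x ∈ a, x ∈ R) ∧ IsQuiddity R b ∧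
    3 ≤ a.length ∧ 3 ≤ b.length ∧ CyclicEquiv c (oplus a b)

/-- The irreducible λ-quiddities over R : the λ-quiddities of size ≥ 3 which are not
reducible (those of size < 3, i.e. (0,0), are by convention not irreducible). -/
def IrreducibleQuiddity (R : Set ℂ) (c : List ℂ) : Prop :=
  IsQuiddity R c ∧ 3 ≤ c.length ∧ ¬ ReducibleQuiddity R c

/-- The subgroup ⟨w⟩ = {kw : k ∈ ℤ} of (ℂ, +), as a set. -/
def subgroupGen (w : ℂ) : Set ℂ := {x | ∃ k : ℤ, x = (k : ℂ) * w}

end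




lemma Mlist_nil : Mlist [] = 1 := rfl
lemma Mlist_cons (x : ℂ) (t : List ℂ) : Mlist (x :: t) = Mlist t * matE x := by
  simp [Mlist, List.reverse_cons]

lemma mul_matE_00 (M : Matrix (Fin 2) (Fin 2) ℂ) (x : ℂ) :
    (M * matE x) 0 0 = x * M 0 0 + M 0 1 := by
  simp [matE, Matrix.mul_apply, Fin.sum_univ_two]; ring
lemma mul_matE_01 (M : Matrix (Fin 2) (Fin 2) ℂ) (x : ℂ) :
    (M * matE x) 0 1 = -(M 0 0) := by
  simp [matE, Matrix.mul_apply, Fin.sum_univ_two]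

lemma key_invariant (l : List ℂ) (hne : l ≠ []) (h : ∀ x ∈ l, 2 ≤ ‖x‖) :
    1 ≤ ‖Mlist l 0 1‖ ∧
      ‖Mlist l 0 1‖ + 1 ≤ ‖Mlist l 0 0‖ := by
  induction l with
  | nil => simp at hne
  | cons x t ih =>
    have hx : 2 ≤ ‖x‖ := h x (by simp)
    rcases eq_or_ne t [] with rfl | ht
    · refine ⟨by simp [Mlist_cons, Mlist_nil, matE], ?_⟩
      simp [Mlist_cons, Mlist_nil, matE]
      linarith
    · obtain ⟨h1, h2⟩ := ih ht (fun y hy => h y (by simp [hy]))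
      rw [Mlist_cons, mul_matE_00, mul_matE_01]
      set u := Mlist t 0 0
      set v := Mlist t 0 1
      have hlow : ‖x‖ * ‖u‖ - ‖v‖
          ≤ ‖x * u + v‖ := by
        have h3 : ‖x * u‖ ≤ ‖x * u + v‖ + ‖v‖ := by
          calc ‖x * u‖ = ‖(x * u + v) + (-v)‖ := by ring_nf
          _ ≤ ‖x * u + v‖ + ‖-v‖ := norm_add_le _ _
          _ = ‖x * u + v‖ + ‖v‖ := by simp
        rw [norm_mul] at h3
        linarith
      have hmul : 2 * ‖u‖ ≤ ‖x‖ * ‖u‖ :=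
        mul_le_mul_of_nonneg_right hx (norm_nonneg _)
      rw [norm_neg]
      constructor <;> linarith

lemma Mlist_ne_pm (l : List ℂ) (hne : l ≠ []) (h : ∀ x ∈ l, 2 ≤ ‖x‖) :
    ¬ (Mlist l = 1 ∨ Mlist l = -1) := by
  rintro (h1 | h1) <;> {
    have := (key_invariant l hne h).1
    rw [h1] at this
    norm_num [Matrix.one_apply] at this }

lemma matE_isUnit (x : ℂ) : IsUnit (matE x) := by
  rw [Matrix.isUnit_iff_isUnit_det, matE, Matrix.det_fin_two_of]
  simp

lemma Mlist_rotate_pm (l : List ℂ) (k : ℕ) (h : Mlist l = 1 ∨ Mlist l = -1) :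
    Mlist (l.rotate k) = 1 ∨ Mlist (l.rotate k) = -1 := by
  induction k with
  | zero => simpa using h
  | succ k ih =>
    rw [← List.rotate_rotate]
    set m := l.rotate k with hm
    clear_value m
    rcases m with _ | ⟨x, t⟩
    · simpa using ih
    · rw [List.rotate_cons_succ, List.rotate_zero]
      have hconc : Mlist (t ++ [x]) = matE x * Mlist t := by
        simp [Mlist, List.reverse_append]
      rw [hconc]
      have step : ∀ ε : Matrix (Fin 2) (Fin 2) ℂ, ε * matE x = matE x * ε →
          Mlist t * matE x = ε → matE x * Mlist t = ε := by
        intro ε hcomm hε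
        apply (matE_isUnit x).mul_right_cancel
        rw [mul_assoc, hε, hcomm]
      rcases ih with ih | ih <;> rw [Mlist_cons] at ih
      · exact Or.inl (step 1 (by simp) ih)
      · exact Or.inr (step (-1) (by simp) ih)


lemma Mlist_surgery (t : ℂ) : Mlist [t, 0, -t, 0] = 1 := by
  simp [Mlist_cons, Mlist_nil, matE, Matrix.mul_fin_two, Matrix.one_fin_two]

lemma Mlist_three_10 (x y : ℂ) : Mlist [0, x, y] 1 0 = -1 := by
  simp [Mlist_cons, Mlist_nil, matE, Matrix.mul_fin_two]

lemma Mlist_four (x y z : ℂ)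
    (h : Mlist [0, x, y, z] = 1 ∨ Mlist [0, x, y, z] = -1) : y = 0 ∧ z = -x := by
  have h10 : Mlist [0,x,y,z] 1 0 = -y := by
    simp [Mlist_cons, Mlist_nil, matE, Matrix.mul_fin_two]
  have h01 : Mlist [0,x,y,z] 0 1 = z * (1 - x*y) + x := by
    simp [Mlist_cons, Mlist_nil, matE, Matrix.mul_fin_two]; ring
  have hy : y = 0 := by
    rcases h with h | h <;> rw [h] at h10 <;>
      · simp [Matrix.one_apply] at h10; simp [h10]
  subst hy
  refine ⟨rfl, ?_⟩
  rcases h with h | h <;> rw [h] at h01 <;>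
    · simp [Matrix.one_apply] at h01; linear_combination -h01

noncomputable section
def matER {A : Type*} [CommRing A] (a : A) : Matrix (Fin 2) (Fin 2) A := !![a, -1; 1, 0]
def MlistR {A : Type*} [CommRing A] (l : List A) : Matrix (Fin 2) (Fin 2) A :=
  (l.reverse.map matER).prod
end

lemma map_MlistR {A : Type*} [CommRing A] (f : A →+* ℂ) (l : List A) :
    (MlistR l).map f = Mlist (l.map f) := by
  have h1 : (MlistR l).map f = f.mapMatrix (MlistR l) := rfl
  have hfun : (⇑f.mapMatrix ∘ matER : A → Matrix (Fin 2) (Fin 2) ℂ) = matE ∘ f := by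
    funext a
    ext i j
    fin_cases i <;> fin_cases j <;>
      simp [matER, matE, RingHom.mapMatrix_apply, Matrix.map_apply]
  rw [h1, MlistR, map_list_prod, Mlist, ← List.map_reverse, List.map_map, List.map_map, hfun]

lemma MlistR_eq_pm {A : Type*} [CommRing A] (f : A →+* ℂ) (hf : Function.Injective f)
    (l : List A) (h : Mlist (l.map f) = 1 ∨ Mlist (l.map f) = -1) :
    MlistR l = 1 ∨ MlistR l = -1 := by
  rw [← map_MlistR] at h
  rcases h with h | h
  · left
    ext i j
    apply hf
    have := congrFun (congrFun (congrArg (fun M => (M : Matrix (Fin 2) (Fin 2) ℂ)) h) i) j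
    simpa [Matrix.map_apply, Matrix.one_apply, apply_ite f] using this
  · right
    ext i j
    apply hf
    have := congrFun (congrFun (congrArg (fun M => (M : Matrix (Fin 2) (Fin 2) ℂ)) h) i) j
    simpa [Matrix.map_apply, Matrix.one_apply, apply_ite f] using this


lemma exists_ks {w : ℂ} (c : List ℂ) (hc : ∀ x ∈ c, x ∈ subgroupGen w) :
    ∃ ks : List ℤ, c = ks.map (fun k : ℤ => (k : ℂ) * w) := by
  induction c with
  | nil => exact ⟨[], rfl⟩
  | cons x t ih =>
    obtain ⟨ks, hks⟩ := ih (fun y hy => hc y (by simp [hy]))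
    obtain ⟨k, hk⟩ := hc x (by simp)
    exact ⟨k :: ks, by rw [List.map_cons, ← hks, hk]⟩

lemma quiddity_has_zero (w : ℂ) (hw : IsAlgebraic ℚ w) (β : ℂ)
    (hβroot : Polynomial.aeval β (minpoly ℚ w) = 0)
    (hβ : 2 ≤ ‖β‖)     (c : List ℂ) (hne : c ≠ []) (hcR : ∀ x ∈ c, x ∈ subgroupGen w)
    (hpm : Mlist c = 1 ∨ Mlist c = -1) : (0 : ℂ) ∈ c := by
  by_contra h0
  obtain ⟨ks, rfl⟩ := exists_ks c hcR
  set p := minpoly ℚ w with hp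
  haveI : Fact (Irreducible p) := ⟨minpoly.irreducible hw.isIntegral⟩
  set ψ : AdjoinRoot p →ₐ[ℚ] ℂ := AdjoinRoot.liftAlgHom p (Algebra.ofId ℚ ℂ) w (by rw [← minpoly.aeval ℚ w, Polynomial.aeval_def]; rfl)
  set φ : AdjoinRoot p →ₐ[ℚ] ℂ := AdjoinRoot.liftAlgHom p (Algebra.ofId ℚ ℂ) β (by rw [← hβroot, Polynomial.aeval_def]; rfl)
  set L : List (AdjoinRoot p) := ks.map (fun k : ℤ => (k : AdjoinRoot p) * AdjoinRoot.root p)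
    with hL
  have hLψ : L.map ψ = ks.map (fun k : ℤ => (k : ℂ) * w) := by
    rw [hL, List.map_map]
    congr 1
    funext k
    simp [ψ]
    exact (map_mul _ _ _).trans (congrArg₂ _ (map_intCast _ _) (AdjoinRoot.liftAlgHom_root _ _ _ _))
  have hLφ : L.map φ = ks.map (fun k : ℤ => (k : ℂ) * β) := by
    rw [hL, List.map_map]
    congr 1
    funext k
    simp [φ]
    exact (map_mul _ _ _).trans (congrArg₂ _ (map_intCast _ _) (AdjoinRoot.liftAlgHom_root _ _ _ _))
  have hψ : Function.Injective (ψ : AdjoinRoot p →+* ℂ) := RingHom.injective _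
  have hA : MlistR L = 1 ∨ MlistR L = -1 := by
    apply MlistR_eq_pm _ hψ
    rw [show (L.map (ψ : AdjoinRoot p →+* ℂ)) = L.map ψ from rfl, hLψ]
    exact hpm
  have hβpm : Mlist (ks.map (fun k : ℤ => (k : ℂ) * β)) = 1 ∨
      Mlist (ks.map (fun k : ℤ => (k : ℂ) * β)) = -1 := by
    rw [← hLφ]
    rcases hA with hA | hA
    · left
      rw [show (L.map φ) = L.map (φ : AdjoinRoot p →+* ℂ) from rfl, ← map_MlistR, hA]
      exact Matrix.map_one _ (map_zero _) (map_one _)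
    · right
      rw [show (L.map φ) = L.map (φ : AdjoinRoot p →+* ℂ) from rfl, ← map_MlistR, hA]
      have : ((-1 : Matrix (Fin 2) (Fin 2) (AdjoinRoot p))).map (φ : AdjoinRoot p →+* ℂ)
          = (φ : AdjoinRoot p →+* ℂ).mapMatrix (-1) := rfl
      rw [this, map_neg, _root_.map_one]
  refine Mlist_ne_pm _ ?_ ?_ hβpm
  · simp only [ne_eq, List.map_eq_nil_iff]
    intro h
    exact hne (by simp [h])
  · intro x hx
    simp only [List.mem_map] at hx
    obtain ⟨k, hk, rfl⟩ := hx
    have hk0 : k ≠ 0 := by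
      rintro rfl
      exact h0 (by simpa using List.mem_map_of_mem (f := fun k : ℤ => (k : ℂ) * w) hk)
    rw [norm_mul]
    have h1 : (1 : ℝ) ≤ ‖(k : ℂ)‖ := by
      rw [Complex.norm_intCast]
      have : (1:ℤ) ≤ |k| := Int.one_le_abs hk0
      calc (1:ℝ) ≤ |(k : ℤ)| := by exact_mod_cast this
        _ = |(k : ℝ)| := by push_cast; rfl
    nlinarith [norm_nonneg (k : ℂ)]


lemma oplus_length (a b : List ℂ) (ha : 2 ≤ a.length) (hb : 2 ≤ b.length) :
    (oplus a b).length = a.length + b.length - 2 := by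
  simp [oplus]
  omega

lemma oplus_surgery (x : ℂ) (g : List ℂ) (y z : ℂ) :
    oplus ((x :: g) ++ [y + z]) [-z, 0, z, 0] = (x :: g) ++ [y, 0, z] := by
  simp only [oplus]
  have h1 : ((x :: g) ++ [y + z]).headI = x := by simp
  have h2 : ((x :: g) ++ [y + z]).tail.dropLast = g := by
    simp [List.dropLast_concat]
  have h3 : ((x :: g) ++ [y + z]).getLastD 0 = y + z := List.getLastD_concat
  rw [h1, h2, h3]
  simp


lemma no_three (w : ℂ) (hw : IsAlgebraic ℚ w) (β : ℂ)
    (hβroot : Polynomial.aeval β (minpoly ℚ w) = 0)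
    (hβ : 2 ≤ ‖β‖)
    (c : List ℂ) (hq : IsQuiddity (subgroupGen w) c) : c.length ≠ 3 := by
  intro h3
  obtain ⟨hne, hR, hpm⟩ := hq
  have h0 : (0 : ℂ) ∈ c := quiddity_has_zero w hw β hβroot hβ c hne hR hpm
  obtain ⟨i, hi, hci⟩ := List.mem_iff_getElem.1 h0
  have hdpm := Mlist_rotate_pm c i hpm
  have hd0 : (c.rotate i)[0]? = some (0:ℂ) := by
    have hlt : 0 < (c.rotate i).length := by simp; omega
    rw [List.getElem?_eq_getElem hlt, List.getElem_rotate]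
    simp [h3, Nat.mod_eq_of_lt (by omega : i < 3), hci]
  have hdl : (c.rotate i).length = 3 := by simp [h3]
  set d := c.rotate i with hd
  clear_value d
  rcases d with _ | ⟨d0, _ | ⟨x, _ | ⟨y, _ | ⟨z, t⟩⟩⟩⟩ <;> simp at hdl
  obtain rfl : d0 = 0 := by simpa using hd0
  have h10 := Mlist_three_10 x y
  rcases hdpm with h | h <;> rw [h] at h10 <;> simp [Matrix.one_apply] at h10

lemma four_case (w : ℂ) (hw : IsAlgebraic ℚ w) (β : ℂ)
    (hβroot : Polynomial.aeval β (minpoly ℚ w) = 0)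
    (hβ : 2 ≤ ‖β‖)
    (c : List ℂ) (hq : IsQuiddity (subgroupGen w) c) (h4 : c.length = 4) :
    ∃ x : ℂ, x ∈ c ∧ (c = [0,x,0,-x] ∨ c = [x,0,-x,0] ∨ c = [0,-x,0,x] ∨ c = [-x,0,x,0]) := by
  obtain ⟨hne, hR, hpm⟩ := hq
  have h0 : (0 : ℂ) ∈ c := quiddity_has_zero w hw β hβroot hβ c hne hR hpm
  obtain ⟨i, hi, hci⟩ := List.mem_iff_getElem.1 h0
  have hdpm := Mlist_rotate_pm c i hpm
  have hd0 : (c.rotate i)[0]? = some (0:ℂ) := by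
    have hlt : 0 < (c.rotate i).length := by simp; omega
    rw [List.getElem?_eq_getElem hlt, List.getElem_rotate]
    simp [h4, Nat.mod_eq_of_lt (by omega : i < 4), hci]
  have hdl : (c.rotate i).length = 4 := by simp [h4]
  have hc : c = (c.rotate i).rotate (4 - i) := by
    rw [List.rotate_rotate]
    have : i + (4 - i) = 4 := by omega
    rw [this, ← h4, List.rotate_length]
  set d := c.rotate i with hd
  clear_value d
  rcases d with _ | ⟨d0, _ | ⟨x, _ | ⟨y, _ | ⟨z, _ | ⟨u, t⟩⟩⟩⟩⟩ <;> simp at hdl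
  obtain rfl : d0 = 0 := by simpa using hd0
  obtain ⟨rfl, rfl⟩ := Mlist_four x y z hdpm
  refine ⟨x, ?_, ?_⟩
  · have : x ∈ c.rotate i := by rw [← hd]; simp
    exact List.mem_rotate.1 this
  · have hi4 : i < 4 := by omega
    interval_cases i <;> rw [hc] <;> simp [List.rotate]

lemma subgroupGen_zero (w : ℂ) : (0:ℂ) ∈ subgroupGen w := ⟨0, by simp⟩
lemma subgroupGen_neg (w : ℂ) {x : ℂ} (h : x ∈ subgroupGen w) : -x ∈ subgroupGen w := by
  obtain ⟨k, rfl⟩ := h; exact ⟨-k, by push_cast; ring⟩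
lemma subgroupGen_add (w : ℂ) {x y : ℂ} (hx : x ∈ subgroupGen w) (hy : y ∈ subgroupGen w) :
    x + y ∈ subgroupGen w := by
  obtain ⟨k, rfl⟩ := hx; obtain ⟨m, rfl⟩ := hy; exact ⟨k + m, by push_cast; ring⟩

lemma five_reducible (w : ℂ) (c : List ℂ) (hR : ∀ x ∈ c, x ∈ subgroupGen w)
    (h0 : (0:ℂ) ∈ c) (h5 : 5 ≤ c.length) : ReducibleQuiddity (subgroupGen w) c := by
  set n := c.length with hn
  obtain ⟨i, hi, hci⟩ := List.mem_iff_getElem.1 h0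
  obtain ⟨d, hd⟩ : ∃ d, c.rotate (i + 2) = d := ⟨_, rfl⟩
  have hdR : ∀ x ∈ d, x ∈ subgroupGen w := fun x hx =>
    hR x (List.mem_rotate.1 (hd ▸ hx))
  have hdl : d.length = n := by rw [← hd, List.length_rotate]
  have hd2 : d[n-2]? = some 0 := by
    rw [← hd]
    have hlt : n - 2 < (c.rotate (i+2)).length := by simp; omega
    rw [List.getElem?_eq_getElem hlt, List.getElem_rotate]
    have e1 : (n - 2 + (i + 2)) % c.length = i := by
      have e2 : n - 2 + (i + 2) = c.length + i := by omega
      rw [e2, Nat.add_mod_left]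
      exact Nat.mod_eq_of_lt hi
    simp only [e1, hci]
  obtain ⟨f, hf⟩ : ∃ f, d.take (n-3) = f := ⟨_, rfl⟩
  obtain ⟨e, he⟩ : ∃ e, d.drop (n-3) = e := ⟨_, rfl⟩
  have hde : d = f ++ e := by rw [← hf, ← he, List.take_append_drop]
  have hfl : f.length = n - 3 := by rw [← hf]; simp [hdl]; try omega
  have hel : e.length = 3 := by rw [← he]; simp [hdl]; try omega
  have he1 : e[1]? = some 0 := by
    rw [← he, List.getElem?_drop]
    have : n - 3 + 1 = n - 2 := by omega
    rw [this, hd2]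
  obtain ⟨y, m, z, rfl⟩ := List.length_eq_three.1 hel
  obtain rfl : m = 0 := by simpa using he1
  obtain ⟨x, g, hxg⟩ : ∃ x g, f = x :: g := by
    rcases f with _ | ⟨x, g⟩
    · simp at hfl; omega
    · exact ⟨x, g, rfl⟩
  have hgl : g.length = n - 4 := by rw [hxg] at hfl; simp at hfl; omega
  have hyR : y ∈ subgroupGen w := hdR y (by rw [hde]; simp)
  have hzR : z ∈ subgroupGen w := hdR z (by rw [hde]; simp)
  refine ⟨(x :: g) ++ [y + z], [-z, 0, z, 0], ?_, ?_, ?_, by simp, ?_⟩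
  · intro u hu
    rcases List.mem_append.1 hu with hu | hu
    · exact hdR u (by rw [hde, hxg]; exact List.mem_append_left _ hu)
    · rw [List.mem_singleton.1 hu]
      exact subgroupGen_add w hyR hzR
  · refine ⟨by simp, ?_, Or.inl ?_⟩
    · intro u hu
      simp only [List.mem_cons, List.not_mem_nil, or_false] at hu
      rcases hu with rfl | rfl | rfl | rfl
      · exact subgroupGen_neg w hzR
      · exact subgroupGen_zero w
      · exact hzR
      · exact subgroupGen_zero w
    · have := Mlist_surgery (-z)
      rwa [neg_neg] at this
  · simp; omega
  · refine Or.inl ⟨i + 2, ?_⟩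
    rw [oplus_surgery, ← hxg, hd, hde]

lemma Mlist_v (x : ℂ) : Mlist [0, x, 0, -x] = 1 := by
  simp [Mlist_cons, Mlist_nil, matE, Matrix.mul_fin_two, Matrix.one_fin_two]

lemma cyclic_length {a b : List ℂ} (h : CyclicEquiv a b) : a.length = b.length := by
  rcases h with ⟨k, rfl⟩ | ⟨k, rfl⟩ <;> simp

theorem stmt0 (w : ℂ) (hw : IsAlgebraic ℚ w) (β : ℂ)
    (hβroot : Polynomial.aeval β (minpoly ℚ w) = 0)
    (hβ : 2 ≤ ‖β‖) :
    {c : List ℂ | IrreducibleQuiddity (subgroupGen w) c} =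
      {c : List ℂ | ∃ k : ℤ, c = [0, (k : ℂ) * w, 0, -((k : ℂ) * w)]} ∪
      {c : List ℂ | ∃ k : ℤ, c = [(k : ℂ) * w, 0, -((k : ℂ) * w), 0]} := by
  ext c
  simp only [Set.mem_setOf_eq, Set.mem_union]
  constructor
  · rintro ⟨hq, h3, hirr⟩
    have h0 : (0:ℂ) ∈ c := quiddity_has_zero w hw β hβroot hβ c hq.1 hq.2.1 hq.2.2
    have hne3 : c.length ≠ 3 := no_three w hw β hβroot hβ c hq
    have hle4 : c.length ≤ 4 := by
      by_contra h
      exact hirr (five_reducible w c hq.2.1 h0 (by omega))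
    have h4 : c.length = 4 := by omega
    obtain ⟨x, hxc, hforms⟩ := four_case w hw β hβroot hβ c hq h4
    obtain ⟨k, rfl⟩ := hq.2.1 x hxc
    rcases hforms with h | h | h | h
    · exact Or.inl ⟨k, h⟩
    · exact Or.inr ⟨k, h⟩
    · refine Or.inl ⟨-k, ?_⟩
      rw [h]; push_cast; ring_nf
    · refine Or.inr ⟨-k, ?_⟩
      rw [h]; push_cast; ring_nf
  · intro h
    have key : ∀ k : ℤ, ∀ c' : List ℂ,
        (c' = [0, (k : ℂ) * w, 0, -((k : ℂ) * w)] ∨ c' = [(k : ℂ) * w, 0, -((k : ℂ) * w), 0]) →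
        IrreducibleQuiddity (subgroupGen w) c' := by
      intro k c' hc'
      have hkR : ((k:ℂ) * w) ∈ subgroupGen w := ⟨k, rfl⟩
      have hq : IsQuiddity (subgroupGen w) c' := by
        refine ⟨?_, ?_, Or.inl ?_⟩
        · rcases hc' with rfl | rfl <;> simp
        · intro u hu
          rcases hc' with rfl | rfl <;> simp only [List.mem_cons, List.not_mem_nil, or_false] at hu <;>
            [rcases hu with rfl | rfl | rfl | rfl; rcases hu with rfl | rfl | rfl | rfl]
          · exact subgroupGen_zero w
          · exact hkR
          · exact subgroupGen_zero w
          · exact subgroupGen_neg w hkR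
          · exact hkR
          · exact subgroupGen_zero w
          · exact subgroupGen_neg w hkR
          · exact subgroupGen_zero w
        · rcases hc' with rfl | rfl
          · exact Mlist_v _
          · exact Mlist_surgery _
      refine ⟨hq, by rcases hc' with rfl | rfl <;> simp, ?_⟩
      rintro ⟨a, b, haR, hbq, ha3, hb3, hce⟩
      have hlen := cyclic_length hce
      rw [oplus_length a b (by omega) (by omega)] at hlen
      have hc4 : c'.length = 4 := by rcases hc' with rfl | rfl <;> simp
      have hb : b.length = 3 := by omega
      exact no_three w hw β hβroot hβ b hbq hb
    rcases h with ⟨k, hk⟩ | ⟨k, hk⟩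
    · exact key k c (Or.inl hk)
    · exact key k c (Or.inr hk)
end

section
/- Let w = a + ib be a complex number with a, b real and |ab| ≥ 1. Then the set of irreducible λ-quiddities over ⟨w⟩ is exactly {(0, kw, 0, −kw) : k ∈ ℤ} ∪ {(kw, 0, −kw, 0) : k ∈ ℤ}. -/
open Matrix Polynomial

namespace Stmt2Aux
open Complex

noncomputable def sg (w : ℂ) : ℝ := if 0 ≤ (w^2).im then 1 else -1
noncomputable def uu (w : ℂ) : ℂ := (sg w : ℂ) * (w^2 * (-Complex.I)) / ((‖w^2‖ : ℝ) : ℂ)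
noncomputable def psi (w : ℂ) : ℂ := (1 + uu w) / ((‖1 + uu w‖ : ℝ) : ℂ)

variable {w : ℂ}

lemma habs2 (hIm : 2 ≤ |(w^2).im|) : 2 ≤ ‖w^2‖ :=
  le_trans hIm (Complex.abs_im_le_norm _)

lemma hw2ne (hIm : 2 ≤ |(w^2).im|) : w^2 ≠ 0 := by
  intro h
  have := habs2 hIm
  rw [h] at this; simp at this; linarith

lemma hwne (hIm : 2 ≤ |(w^2).im|) : w ≠ 0 := by
  intro h; exact hw2ne hIm (by rw [h]; ring)

lemma sg_mul_im (hIm : 2 ≤ |(w^2).im|) : sg w * (w^2).im = |(w^2).im| := by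
  unfold sg
  split <;> rename_i h
  · rw [_root_.abs_of_nonneg h]; ring
  · rw [_root_.abs_of_neg (lt_of_not_ge h)]; ring

lemma sg_abs : |sg w| = 1 := by
  unfold sg; split <;> simp

lemma uu_re (hIm : 2 ≤ |(w^2).im|) : (uu w).re = |(w^2).im| / ‖w^2‖ := by
  unfold uu
  rw [Complex.div_ofReal_re]
  have : ((sg w : ℂ) * (w^2 * (-Complex.I))).re = sg w * (w^2).im := by
    simp [Complex.mul_re, Complex.mul_im]
  rw [this, sg_mul_im hIm]

lemma uu_re_pos (hIm : 2 ≤ |(w^2).im|) : 0 < (uu w).re := by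
  rw [uu_re hIm]
  have h1 := habs2 hIm
  exact div_pos (by linarith) (by linarith)

lemma uu_abs (hIm : 2 ≤ |(w^2).im|) : ‖uu w‖ = 1 := by
  unfold uu
  have h0 : 0 < ‖w^2‖ := lt_of_lt_of_le two_pos (habs2 hIm)
  rw [norm_div, norm_mul, norm_mul, Complex.norm_real, Real.norm_eq_abs, Complex.norm_real,
    Real.norm_eq_abs, sg_abs, norm_neg, Complex.norm_I, _root_.abs_of_pos h0]
  rw [one_mul, mul_one]
  exact div_self (ne_of_gt h0)

lemma normSq_uu (hIm : 2 ≤ |(w^2).im|) : Complex.normSq (uu w) = 1 := by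
  rw [← Complex.sq_norm, uu_abs hIm]; norm_num

lemma one_add_uu_ne (hIm : 2 ≤ |(w^2).im|) : 1 + uu w ≠ 0 := by
  intro h
  have h1 : (1 + uu w).re = 0 := by rw [h]; simp
  rw [Complex.add_re, Complex.one_re] at h1
  have := uu_re_pos hIm
  linarith

lemma psi_sq (hIm : 2 ≤ |(w^2).im|) : (psi w)^2 = uu w := by
  have hcu : uu w * (starRingEnd ℂ) (uu w) = 1 := by
    rw [Complex.mul_conj, normSq_uu hIm]; norm_num
  have hne := one_add_uu_ne hIm
  have hrne : ((‖1 + uu w‖ : ℝ) : ℂ) ≠ 0 := by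
    simp [norm_ne_zero_iff.2 hne]
  have hr2 : ((‖1 + uu w‖ : ℝ) : ℂ)^2 = (1 + uu w) * (starRingEnd ℂ) (1 + uu w) := by
    rw [← Complex.ofReal_pow, Complex.sq_norm, Complex.mul_conj]
  have key : (1 + uu w)^2 = uu w * (((‖1 + uu w‖ : ℝ) : ℂ)^2) := by
    have hconj : (starRingEnd ℂ) (1 + uu w) = 1 + (starRingEnd ℂ) (uu w) := by
      rw [RingHom.map_add, RingHom.map_one]
    rw [hr2, hconj]
    linear_combination (-(1 + uu w)) * hcu
  rw [psi, div_pow, key]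
  field_simp

lemma psi_re (hIm : 2 ≤ |(w^2).im|) :
    (psi w).re = (1 + (uu w).re) / ‖1 + uu w‖ := by
  rw [psi, Complex.div_ofReal_re, Complex.add_re, Complex.one_re]

lemma psi_re_pos (hIm : 2 ≤ |(w^2).im|) : 0 < (psi w).re := by
  rw [psi_re hIm]
  have h1 := uu_re_pos hIm
  have h2 : 0 < ‖1 + uu w‖ := norm_pos_iff.2 (one_add_uu_ne hIm)
  positivity

lemma abs_sq_one_add_uu (hIm : 2 ≤ |(w^2).im|) :
    (‖1 + uu w‖)^2 = 2 + 2 * (uu w).re := by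
  rw [Complex.sq_norm, Complex.normSq_apply, Complex.add_re, Complex.add_im, Complex.one_re,
    Complex.one_im]
  have : (uu w).re * (uu w).re + (uu w).im * (uu w).im = 1 := by
    have := normSq_uu hIm
    rw [Complex.normSq_apply] at this
    linarith
  nlinarith [this]

lemma Mp2 (hIm : 2 ≤ |(w^2).im|) : 2 ≤ ‖w^2‖ * (psi w).re^2 := by
  have h1 := abs_sq_one_add_uu hIm
  have h2 := uu_re hIm
  have h3 := habs2 hIm
  have h4 : 0 < ‖1 + uu w‖ := norm_pos_iff.2 (one_add_uu_ne hIm)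
  have h5 : (psi w).re^2 = (1 + (uu w).re)/2 := by
    rw [psi_re hIm, div_pow, h1]
    have h6 : 0 < (uu w).re := uu_re_pos hIm
    field_simp
  rw [h5, h2]
  have h7 : 0 < ‖w^2‖ := by linarith
  have h8 : ‖w^2‖ * ((1 + |(w^2).im| / ‖w^2‖)/2)
      = (‖w^2‖ + |(w^2).im|)/2 := by
    field_simp [norm_ne_zero_iff.2 (hw2ne hIm)]
  rw [h8]
  linarith



lemma real_step (p K X Y M N s : ℝ) (hp : 0 < p) (hX : p/2 ≤ |X|) (hN : N = X^2 + Y^2)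
    (hM : 2 ≤ M) (hMp : 2 ≤ M * p^2) (hK : 1 ≤ |K|) (hs : |s| = 1) :
    p/2 ≤ |K * p + s * (M * Y) / (M^2 * N)| := by
  have hX0 : 0 < |X| := lt_of_lt_of_le (by positivity) hX
  have hX2 : 0 < X^2 := by
    have : X ≠ 0 := by intro h; rw [h] at hX0; simp at hX0
    positivity
  have hN0 : 0 < N := by rw [hN]; positivity
  have hM0 : 0 < M := by linarith
  have key : |s * (M * Y) / (M^2 * N)| ≤ 1/(M*p) := by
    rw [abs_div, abs_mul, hs, one_mul, abs_mul]
    rw [div_le_div_iff₀ (by positivity) (by positivity)]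
    have habs : |M| = M := _root_.abs_of_pos hM0
    have habsN : |M^2 * N| = M^2 * N := _root_.abs_of_pos (by positivity)
    rw [habs, habsN]
    have h1 : p * |Y| ≤ X^2 + Y^2 := by
      nlinarith [sq_nonneg (|X| - |Y|), abs_nonneg Y, _root_.sq_abs X, _root_.sq_abs Y]
    calc M * |Y| * (M * p) = M^2 * (p * |Y|) := by ring
    _ ≤ M^2 * (X^2 + Y^2) := by nlinarith
    _ = 1 * (M^2 * N) := by rw [hN]; ring
  have h2 : 1/(M*p) ≤ p/2 := by
    rw [div_le_div_iff₀ (by positivity) (by positivity)]; nlinarith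
  have h3 : p ≤ |K * p| := by
    rw [abs_mul, _root_.abs_of_pos hp]; nlinarith
  have h4 := abs_add_le (K * p + s * (M * Y) / (M^2 * N)) (-(s * (M * Y) / (M^2 * N)))
  simp only [add_neg_cancel_right] at h4
  rw [abs_neg] at h4
  linarith

lemma step (hIm : 2 ≤ |(w^2).im|) (k : ℤ) (hk : k ≠ 0) (t : ℂ)
    (ht : (psi w).re / 2 ≤ |(psi w * t).re|) :
    t ≠ 0 ∧ (psi w).re / 2 ≤ |(psi w * ((k : ℂ) - 1/(w^2 * t))).re| := by
  have hp := psi_re_pos hIm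
  have hM2 := habs2 hIm
  have hw2 := hw2ne hIm
  have hpsine : psi w ≠ 0 := by
    intro h; rw [h] at hp; simp at hp
  have hvre : 0 < |(psi w * t).re| := lt_of_lt_of_le (by positivity) ht
  have hvne : psi w * t ≠ 0 := by
    intro h; rw [h] at hvre; simp at hvre
  have htne : t ≠ 0 := by
    intro h; rw [h, mul_zero] at hvne; exact hvne rfl
  refine ⟨htne, ?_⟩
  have hMne : ((‖w^2‖ : ℝ) : ℂ) ≠ 0 := by
    simp only [ne_eq, Complex.ofReal_eq_zero]
    exact ne_of_gt (lt_of_lt_of_le two_pos hM2)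
  have h2' : ((‖w^2‖ : ℝ) : ℂ) * psi w^2 = (sg w : ℂ) * (w^2 * (-Complex.I)) := by
    rw [psi_sq hIm, uu, mul_div_cancel₀ _ hMne]
  have e2 : psi w/(w^2 * t)
      = -((sg w : ℂ) * Complex.I)/(((‖w^2‖ : ℝ) : ℂ) * (psi w * t)) := by
    rw [div_eq_div_iff (mul_ne_zero hw2 htne) (mul_ne_zero hMne hvne)]
    linear_combination t * h2'
  have hid : psi w * ((k : ℂ) - 1/(w^2 * t))
      = (k : ℂ) * psi w + ((sg w : ℂ) * Complex.I)/(((‖w^2‖ : ℝ) : ℂ) * (psi w * t)) := by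
    rw [show psi w * ((k : ℂ) - 1/(w^2 * t)) = (k : ℂ) * psi w - psi w/(w^2 * t) from by ring,
      e2]
    ring
  rw [hid]
  have hre : ((k : ℂ) * psi w + ((sg w : ℂ) * Complex.I)/(((‖w^2‖ : ℝ) : ℂ) * (psi w * t))).re
      = (k : ℝ) * (psi w).re + (sg w) * (‖w^2‖ * (psi w * t).im)
          / ((‖w^2‖)^2 * Complex.normSq (psi w * t)) := by
    rw [Complex.add_re, Complex.div_re, Complex.normSq_mul, Complex.normSq_ofReal]
    simp only [Complex.mul_re, Complex.mul_im, Complex.neg_re, Complex.neg_im, Complex.I_re,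
      Complex.I_im, Complex.ofReal_re, Complex.ofReal_im, Complex.intCast_re, Complex.intCast_im]
    ring
  rw [hre]
  exact real_step (psi w).re (k : ℝ) (psi w * t).re (psi w * t).im (‖w^2‖)
    (Complex.normSq (psi w * t)) (sg w) hp ht (by rw [Complex.normSq_apply]; ring) hM2
    (Mp2 hIm) (by exact_mod_cast Int.one_le_abs hk) sg_abs

lemma matE_mul_10 (x : ℂ) (P : Matrix (Fin 2) (Fin 2) ℂ) : (matE x * P) 1 0 = P 0 0 := by
  simp [matE, Matrix.mul_apply, Fin.sum_univ_two]

lemma matE_mul_00 (x : ℂ) (P : Matrix (Fin 2) (Fin 2) ℂ) :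
    (matE x * P) 0 0 = x * P 0 0 - P 1 0 := by
  simp [matE, Matrix.mul_apply, Fin.sum_univ_two]
  ring

lemma key (hIm : 2 ≤ |(w^2).im|) (l : List ℂ) : l ≠ [] →
    (∀ x ∈ l, ∃ k : ℤ, k ≠ 0 ∧ x = (k : ℂ) * w) →
    ((l.map matE).prod 1 0 ≠ 0 ∧
      (psi w).re/2 ≤ |(psi w * ((l.map matE).prod 0 0 / (w * (l.map matE).prod 1 0))).re| ∧
      (l.map matE).prod 0 0 ≠ 0) := by
  have hwne' := hwne hIm
  have hp := psi_re_pos hIm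
  induction l with
  | nil => intro h; exact absurd rfl h
  | cons x xs ih =>
    intro _ hmem
    obtain ⟨k, hk, hx⟩ := hmem x (by simp)
    cases xs with
    | nil =>
      simp only [List.map_cons, List.map_nil, List.prod_cons, List.prod_nil, mul_one]
      have h1 : matE x 0 0 = x := by simp [matE]
      have h2 : matE x 1 0 = 1 := by simp [matE]
      rw [h1, h2]
      refine ⟨one_ne_zero, ?_, ?_⟩
      · rw [hx, mul_one, mul_div_assoc, div_self hwne', mul_one]
        simp only [Complex.mul_re, Complex.intCast_re, Complex.intCast_im, mul_zero, sub_zero]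
        rw [abs_mul, _root_.abs_of_pos hp]
        have hk1 : (1:ℝ) ≤ |(k:ℝ)| := by exact_mod_cast Int.one_le_abs hk
        nlinarith
      · rw [hx]
        exact mul_ne_zero (Int.cast_ne_zero.2 hk) hwne'
    | cons y ys =>
      have IH := ih (by simp) (fun z hz => hmem z (List.mem_cons_of_mem _ hz))
      obtain ⟨hP10, hinv, hP00⟩ := IH
      set P := ((y :: ys).map matE).prod with hPdef
      set t : ℂ := P 0 0 / (w * P 1 0) with htdef
      obtain ⟨htne, hstep⟩ := step hIm k hk t hinv
      have hprod : ((x :: y :: ys).map matE).prod = matE x * P := by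
        simp [List.prod_cons, hPdef]
      rw [hprod, matE_mul_10, matE_mul_00]
      have hratio : (x * P 0 0 - P 1 0) / (w * P 0 0) = (k : ℂ) - 1/(w^2 * t) := by
        rw [htdef, hx]
        field_simp
      refine ⟨hP00, ?_, ?_⟩
      · rw [hratio]; exact hstep
      · -- x * P 0 0 - P 1 0 ≠ 0 : from hstep, the new ratio has |re| > 0
        intro hzero
        have : ((x * P 0 0 - P 1 0) / (w * P 0 0)) = 0 := by rw [hzero, zero_div]
        rw [hratio] at this
        rw [this, mul_zero] at hstep
        simp at hstep
        linarith

lemma no_all_nonzero (hIm : 2 ≤ |(w^2).im|) (l : List ℂ) (hne : l ≠ [])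
    (hmem : ∀ x ∈ l, (∃ k : ℤ, x = (k : ℂ) * w) ∧ x ≠ 0) :
    Mlist l ≠ 1 ∧ Mlist l ≠ -1 := by
  have hrev : l.reverse ≠ [] := by simpa using hne
  have hmem' : ∀ x ∈ l.reverse, ∃ k : ℤ, k ≠ 0 ∧ x = (k : ℂ) * w := by
    intro x hx
    obtain ⟨⟨k, hk⟩, hx0⟩ := hmem x (List.mem_reverse.1 hx)
    refine ⟨k, fun h => hx0 (by rw [hk, h]; simp), hk⟩
  have h := (key hIm l.reverse hrev hmem').1
  have hM : Mlist l 1 0 ≠ 0 := h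
  constructor <;> intro hEq <;> apply hM <;> rw [hEq] <;> simp [Matrix.one_apply]


-- ===== arithmetic over the subgroup =====

lemma mem_sg {w x : ℂ} (h : x ∈ subgroupGen w) : ∃ k : ℤ, x = (k : ℂ) * w := h

lemma zero_mem_sg (w : ℂ) : (0:ℂ) ∈ subgroupGen w := ⟨0, by simp⟩

lemma neg_mem_sg {w x : ℂ} (h : x ∈ subgroupGen w) : -x ∈ subgroupGen w := by
  obtain ⟨k, rfl⟩ := h; exact ⟨-k, by push_cast; ring⟩

lemma add_mem_sg {w x y : ℂ} (hx : x ∈ subgroupGen w) (hy : y ∈ subgroupGen w) :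
    x + y ∈ subgroupGen w := by
  obtain ⟨k, rfl⟩ := hx; obtain ⟨l, rfl⟩ := hy; exact ⟨k + l, by push_cast; ring⟩

section Main

variable {a b : ℝ} {w : ℂ}

lemma him (hab : 1 ≤ |a * b|) (hw : w = (a : ℂ) + (b : ℂ) * Complex.I) :
    2 ≤ |(w^2).im| := by
  have h : (w^2).im = 2 * (a * b) := by
    rw [hw]; simp [Complex.mul_im, Complex.add_im, Complex.add_re, pow_two]
    ring
  rw [h, abs_mul, _root_.abs_two]
  nlinarith

lemma prod_zero (hab : 1 ≤ |a * b|) (hw : w = (a : ℂ) + (b : ℂ) * Complex.I)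
    {x y : ℂ} (hx : x ∈ subgroupGen w) (hy : y ∈ subgroupGen w) (h : (x * y).im = 0) :
    x * y = 0 := by
  obtain ⟨k, rfl⟩ := hx; obtain ⟨l, rfl⟩ := hy
  have hxy : (k : ℂ) * w * ((l : ℂ) * w) = ((k * l : ℤ) : ℂ) * w^2 := by push_cast; ring
  rw [hxy] at h ⊢
  have him2 : (w^2).im = 2 * (a * b) := by
    rw [hw]; simp [Complex.mul_im, Complex.add_im, Complex.add_re, pow_two]
    ring
  have h2 : (((k * l : ℤ) : ℂ) * w^2).im = ((k * l : ℤ) : ℝ) * (w^2).im := by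
    simp [Complex.mul_im]
  rw [h2, him2] at h
  have hab0 : a * b ≠ 0 := by intro h0; rw [h0] at hab; simp at hab; linarith
  have : ((k * l : ℤ) : ℝ) = 0 := by
    rcases mul_eq_zero.1 h with h' | h'
    · exact h'
    · exact absurd h' (by simpa using hab0)
  have : ((k * l : ℤ) : ℂ) = 0 := by exact_mod_cast this
  rw [this, zero_mul]

-- ===== Mlist on short lists =====

lemma mlist3 (x y z : ℂ) :
    Mlist [x, y, z] = !![z * (y * x - 1) - x, -(z * y) + 1; y * x - 1, -y] := by
  show (([z, y, x]).map matE).prod = _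
  simp only [List.map_cons, List.map_nil, List.prod_cons, List.prod_nil, mul_one]
  ext i j
  fin_cases i <;> fin_cases j <;>
    simp [matE, Matrix.mul_apply, Fin.sum_univ_two] <;> ring

lemma mlist4 (x y z t : ℂ) :
    Mlist [x, y, z, t] =
      !![t * (z * (y * x - 1) - x) - (y * x - 1), t * (-(z * y) + 1) + y;
         z * (y * x - 1) - x, -(z * y) + 1] := by
  show (([t, z, y, x]).map matE).prod = _
  simp only [List.map_cons, List.map_nil, List.prod_cons, List.prod_nil, mul_one]
  ext i j
  fin_cases i <;> fin_cases j <;>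
    simp [matE, Matrix.mul_apply, Fin.sum_univ_two] <;> ring

lemma no_quiddity_three (hab : 1 ≤ |a * b|) (hw : w = (a : ℂ) + (b : ℂ) * Complex.I)
    {x y z : ℂ} (hx : x ∈ subgroupGen w) (hy : y ∈ subgroupGen w)
    (hq : Mlist [x, y, z] = 1 ∨ Mlist [x, y, z] = -1) : False := by
  have h10 : Mlist [x, y, z] 1 0 = 0 := by
    rcases hq with h | h <;> rw [h] <;> simp [Matrix.one_apply]
  rw [mlist3] at h10
  have h10' : y * x - 1 = 0 := by simpa using h10
  have hxy : y * x = 1 := by linear_combination h10'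
  have him0 : (y * x).im = 0 := by rw [hxy]; simp
  have := prod_zero hab hw hy hx him0
  rw [this] at hxy
  exact zero_ne_one hxy

lemma quid_four (hw : w = (a : ℂ) + (b : ℂ) * Complex.I) {t : ℂ}
    (htm : t ∈ subgroupGen w) : IsQuiddity (subgroupGen w) [0, t, 0, -t] := by
  refine ⟨by simp, ?_, Or.inl ?_⟩
  · intro x hx
    simp only [List.mem_cons, List.not_mem_nil, or_false] at hx
    rcases hx with rfl | rfl | rfl | rfl
    · exact zero_mem_sg w
    · exact htm
    · exact zero_mem_sg w
    · exact neg_mem_sg htm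
  · rw [mlist4]
    ext i j
    fin_cases i <;> fin_cases j <;> simp [Matrix.one_apply] <;> ring

lemma quid_four' (hw : w = (a : ℂ) + (b : ℂ) * Complex.I) {t : ℂ}
    (htm : t ∈ subgroupGen w) : IsQuiddity (subgroupGen w) [t, 0, -t, 0] := by
  refine ⟨by simp, ?_, Or.inl ?_⟩
  · intro x hx
    simp only [List.mem_cons, List.not_mem_nil, or_false] at hx
    rcases hx with rfl | rfl | rfl | rfl
    · exact htm
    · exact zero_mem_sg w
    · exact neg_mem_sg htm
    · exact zero_mem_sg w
  · rw [mlist4]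
    ext i j
    fin_cases i <;> fin_cases j <;> simp [Matrix.one_apply] <;> ring

lemma classify_four (hab : 1 ≤ |a * b|) (hw : w = (a : ℂ) + (b : ℂ) * Complex.I)
    {x y z t : ℂ} (hx : x ∈ subgroupGen w) (hy : y ∈ subgroupGen w)
    (hz : z ∈ subgroupGen w) (ht : t ∈ subgroupGen w)
    (hq : Mlist [x, y, z, t] = 1 ∨ Mlist [x, y, z, t] = -1) :
    z = -x ∧ t = -y ∧ (x = 0 ∨ y = 0) := by
  rw [mlist4] at hq
  rcases hq with h | h
  · have h00 : t * (z * (y * x - 1) - x) - (y * x - 1) = 1 := by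
      have := congrFun (congrFun h 0) 0; simpa using this
    have h01 : t * (-(z * y) + 1) + y = 0 := by
      have := congrFun (congrFun h 0) 1; simpa using this
    have h10 : z * (y * x - 1) - x = 0 := by
      have := congrFun (congrFun h 1) 0; simpa using this
    have h11 : -(z * y) + 1 = 1 := by
      have := congrFun (congrFun h 1) 1; simpa using this
    have hzy : z * y = 0 := by linear_combination -h11
    have hxy : y * x = 0 := by linear_combination t * h10 - h00
    have hz' : z = -x := by linear_combination -h10 + x * hzy
    have ht' : t = -y := by linear_combination h01 + t * hzy
    have : x = 0 ∨ y = 0 := by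
      rcases mul_eq_zero.1 hxy with h' | h'
      · exact Or.inr h'
      · exact Or.inl h'
    exact ⟨hz', ht', this⟩
  · have h11 : -(z * y) + 1 = -1 := by
      have := congrFun (congrFun h 1) 1; simpa using this
    have hzy : z * y = 2 := by linear_combination -h11
    have : z * y = 0 := prod_zero hab hw hz hy (by rw [hzy]; simp)
    rw [this] at hzy
    norm_num at hzy

-- ===== list lemmas for reduction =====

lemma headI_mem {l : List ℂ} (h : l ≠ []) : l.headI ∈ l := by
  cases l with
  | nil => exact absurd rfl h
  | cons a t => simp

lemma oplus_spec_aux (h t l : ℂ) (u : List ℂ) :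
    oplus ((h + t) :: (u ++ [l])) [0, t, 0, -t] = (h :: (u ++ [l])) ++ [t, 0] := by
  have hgl : ((h + t) :: (u ++ [l])).getLastD 0 = l := by
    rw [show (h + t) :: (u ++ [l]) = ((h + t) :: u) ++ [l] from rfl,
      List.getLastD_eq_getLast?, List.getLast?_concat]
    rfl
  simp only [oplus, List.headI_cons, List.tail_cons, hgl]
  simp [List.append_assoc, List.dropLast_concat]

lemma oplus_spec (d : List ℂ) (hd : 2 ≤ d.length) (t : ℂ) :
    oplus ((d.headI + t) :: d.tail) [0, t, 0, -t] = d ++ [t, 0] := by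
  obtain ⟨h, d2, rfl⟩ : ∃ h d2, d = h :: d2 := by
    cases d with
    | nil => simp at hd
    | cons h d2 => exact ⟨h, d2, rfl⟩
  obtain ⟨u, l, rfl⟩ : ∃ u l, d2 = u ++ [l] := by
    have hne : d2 ≠ [] := by
      intro h0; rw [h0] at hd; simp at hd
    exact ⟨d2.dropLast, d2.getLast hne, (List.dropLast_append_getLast hne).symm⟩
  simpa using oplus_spec_aux h t l u

lemma oplus_length (x y : List ℂ) (hx : 2 ≤ x.length) (hy : 2 ≤ y.length) :
    (oplus x y).length = x.length + y.length - 2 := by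
  simp only [oplus, List.length_cons, List.length_append, List.length_dropLast,
    List.length_tail]
  omega

lemma cyclic_length {c d : List ℂ} (h : CyclicEquiv c d) : d.length = c.length := by
  rcases h with ⟨k, rfl⟩ | ⟨k, rfl⟩ <;> simp

lemma not_reducible_four (hab : 1 ≤ |a * b|) (hw : w = (a : ℂ) + (b : ℂ) * Complex.I)
    {c : List ℂ} (hlen : c.length = 4) : ¬ ReducibleQuiddity (subgroupGen w) c := by
  rintro ⟨x, y, hxm, hyq, hx3, hy3, hcyc⟩
  have h1 : (oplus x y).length = 4 := by
    have h2 := cyclic_length hcyc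
    rw [hlen] at h2
    exact h2
  rw [oplus_length x y (by omega) (by omega)] at h1
  have hy3' : y.length = 3 := by omega
  obtain ⟨p, q, r, rfl⟩ := List.length_eq_three.1 hy3'
  obtain ⟨hyne, hymem, hyq'⟩ := hyq
  exact no_quiddity_three hab hw (hymem p (by simp)) (hymem q (by simp)) hyq'

end Main

end Stmt2Aux

theorem stmt2 (a b : ℝ) (hab : 1 ≤ |a * b|)
    (w : ℂ) (hw : w = (a : ℂ) + (b : ℂ) * Complex.I) :
    {c : List ℂ | IrreducibleQuiddity (subgroupGen w) c} =
      {c : List ℂ | ∃ k : ℤ, c = [0, (k : ℂ) * w, 0, -((k : ℂ) * w)]} ∪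
      {c : List ℂ | ∃ k : ℤ, c = [(k : ℂ) * w, 0, -((k : ℂ) * w), 0]} := by
  ext c
  simp only [Set.mem_setOf_eq, Set.mem_union]
  constructor
  · rintro ⟨⟨hne, hmem, hpm⟩, hlen, hirr⟩
    by_cases h5 : 5 ≤ c.length
    · -- length ≥ 5 : c is reducible, contradiction
      exfalso
      apply hirr
      have hzero : (0:ℂ) ∈ c := by
        by_contra h0
        have hno := Stmt2Aux.no_all_nonzero (Stmt2Aux.him hab hw) c hne
          (fun x hx => ⟨Stmt2Aux.mem_sg (hmem x hx), fun hxx => h0 (hxx ▸ hx)⟩)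
        rcases hpm with h | h
        · exact hno.1 h
        · exact hno.2 h
      obtain ⟨s, t', rfl⟩ := List.append_of_mem hzero
      have hsl : (s ++ 0 :: t').length = s.length + t'.length + 1 := by simp; omega
      set e := t' ++ s with he
      have hel : e.length = s.length + t'.length := by rw [he]; simp; omega
      have hene : e ≠ [] := by
        intro h0
        rw [h0] at hel
        simp at hel
        omega
      set d := e.dropLast with hd
      set t0 := e.getLast hene with ht0
      have hdl : d.length = s.length + t'.length - 1 := by
        rw [hd, List.length_dropLast, hel]
      have hd2 : 2 ≤ d.length := by omega
      have hdne : d ≠ [] := by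
        intro h0; rw [h0] at hdl; simp at hdl; omega
      have hsub : ∀ x ∈ e, x ∈ subgroupGen w := by
        intro x hx
        rw [he] at hx
        apply hmem
        simp only [List.mem_append, List.mem_cons] at hx ⊢
        tauto
      have ht0m : t0 ∈ subgroupGen w := hsub t0 (ht0 ▸ List.getLast_mem hene)
      have hdm : ∀ x ∈ d, x ∈ subgroupGen w := by
        intro x hx
        exact hsub x (List.dropLast_subset e (hd ▸ hx))
      have hrot : (s ++ 0 :: t').rotate (s.length + 1) = d ++ [t0, 0] := by
        have h1 : s ++ 0 :: t' = (s ++ [0]) ++ t' := by simp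
        calc (s ++ 0 :: t').rotate (s.length + 1)
            = ((s ++ [0]) ++ t').rotate (s ++ [0]).length := by
              rw [← h1]; congr 1; simp
        _ = t' ++ (s ++ [0]) := List.rotate_append_length_eq _ _
        _ = e ++ [0] := by rw [he]; simp
        _ = (d ++ [t0]) ++ [0] := by
              rw [hd, ht0, List.dropLast_append_getLast hene]
        _ = d ++ [t0, 0] := by simp
      refine ⟨(d.headI + t0) :: d.tail, [0, t0, 0, -t0], ?_, ?_, ?_, ?_, ?_⟩
      · intro x hx
        rcases List.mem_cons.1 hx with rfl | hx'
        · exact Stmt2Aux.add_mem_sg (hdm _ (Stmt2Aux.headI_mem hdne)) ht0m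
        · exact hdm x (List.tail_subset d hx')
      · exact Stmt2Aux.quid_four hw ht0m
      · simp only [List.length_cons, List.length_tail]
        omega
      · simp
      · left
        exact ⟨s.length + 1, by rw [Stmt2Aux.oplus_spec d hd2 t0, hrot]⟩
    · have h34 : c.length = 3 ∨ c.length = 4 := by omega
      rcases h34 with h3 | h4
      · exfalso
        obtain ⟨x, y, z, rfl⟩ := List.length_eq_three.1 h3
        exact Stmt2Aux.no_quiddity_three hab hw
          (hmem x (by simp)) (hmem y (by simp)) hpm
      · obtain ⟨x, r1, rfl⟩ : ∃ x r1, c = x :: r1 := by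
          cases c with
          | nil => simp at h4
          | cons x r1 => exact ⟨x, r1, rfl⟩
        have h3' : r1.length = 3 := by simpa using h4
        obtain ⟨y, z, t, rfl⟩ := List.length_eq_three.1 h3'
        have hx := hmem x (by simp)
        have hy := hmem y (by simp)
        have hz := hmem z (by simp)
        have ht := hmem t (by simp)
        obtain ⟨hz', ht', hcase⟩ := Stmt2Aux.classify_four hab hw hx hy hz ht hpm
        rcases hcase with rfl | rfl
        · left
          obtain ⟨k, rfl⟩ := hy
          refine ⟨k, ?_⟩
          rw [hz', ht']
          norm_num
        · right
          obtain ⟨k, rfl⟩ := hx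
          refine ⟨k, ?_⟩
          rw [hz', ht']
          norm_num
  · rintro (⟨k, rfl⟩ | ⟨k, rfl⟩)
    · exact ⟨Stmt2Aux.quid_four hw ⟨k, rfl⟩, by simp,
        Stmt2Aux.not_reducible_four hab hw (by simp)⟩
    · exact ⟨Stmt2Aux.quid_four' hw ⟨k, rfl⟩, by simp,
        Stmt2Aux.not_reducible_four hab hw (by simp)⟩
end

section
/- Let α be a complex number algebraic over ℚ and let β be a conjugate of α (a complex root of the minimal polynomial of α over ℚ). For k_1,…,k_n ∈ ℤ such that (k_1α,…,k_nα) is a λ-quiddity over ⟨α⟩, the λ-quiddity (k_1α,…,k_nα) is irreducible over ⟨α⟩ if and only if (k_1β,…,k_nβ) is an irreducible λ-quiddity over ⟨β⟩. -/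
open Matrix Polynomial

noncomputable section Aux

lemma coeList (γ : ℂ) (ks : List ℤ) :
    (ks.map fun k => (k : ℂ) * γ) = List.map (fun k : ℤ => (k : ℂ) * γ) ks := by
  induction ks with
  | nil => rfl
  | cons a t ih => simpa using ih

/-- Polynomial version of matE. -/
def matEP (k : ℤ) : Matrix (Fin 2) (Fin 2) (Polynomial ℚ) := !![C (k : ℚ) * X, -1; 1, 0]

/-- Polynomial version of Mlist. -/
def MlistP (js : List ℤ) : Matrix (Fin 2) (Fin 2) (Polynomial ℚ) :=
  (js.reverse.map matEP).prod

lemma matEP_map (γ : ℂ) (k : ℤ) : (matEP k).map (aeval γ) = matE ((k : ℂ) * γ) := by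
  ext i j
  fin_cases i <;> fin_cases j <;>
    simp [matEP, matE, Matrix.map_apply]

lemma Mlist_eq (γ : ℂ) (js : List ℤ) :
    Mlist (List.map (fun k : ℤ => (k : ℂ) * γ) js) = (MlistP js).map (aeval γ) := by
  have h1 : (MlistP js).map (aeval γ) =
      ((aeval γ : Polynomial ℚ →ₐ[ℚ] ℂ).toRingHom.mapMatrix) (MlistP js) := rfl
  rw [h1, MlistP, map_list_prod, Mlist, ← List.map_reverse, List.map_map, List.map_map]
  refine congrArg List.prod (List.map_congr_left fun k _ => ?_)
  simp only [Function.comp_apply, RingHom.mapMatrix_apply, AlgHom.toRingHom_eq_coe,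
    RingHom.coe_coe]
  exact (matEP_map γ k).symm

lemma root_transfer {α β : ℂ} (_hα : IsAlgebraic ℚ α)
    (hβ : Polynomial.aeval β (minpoly ℚ α) = 0) {p : Polynomial ℚ}
    (hp : aeval α p = 0) : aeval β p = 0 := by
  obtain ⟨q, rfl⟩ := minpoly.dvd ℚ α hp
  rw [_root_.map_mul, hβ, zero_mul]

lemma matrix_transfer {α β : ℂ} (hα : IsAlgebraic ℚ α)
    (hβ : Polynomial.aeval β (minpoly ℚ α) = 0)
    (M : Matrix (Fin 2) (Fin 2) (Polynomial ℚ)) (N : Matrix (Fin 2) (Fin 2) ℚ)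
    (h : M.map (aeval α) = N.map (algebraMap ℚ ℂ)) :
    M.map (aeval β) = N.map (algebraMap ℚ ℂ) := by
  ext i j
  have h1 : aeval α (M i j) = algebraMap ℚ ℂ (N i j) := by
    have := congrFun (congrFun h i) j
    simpa [Matrix.map_apply] using this
  have h2 : aeval α (M i j - C (N i j)) = 0 := by
    rw [map_sub, aeval_C, h1, sub_self]
  have h3 := root_transfer hα hβ h2
  rw [map_sub, aeval_C, sub_eq_zero] at h3
  simpa [Matrix.map_apply] using h3

lemma one_eq_map : (1 : Matrix (Fin 2) (Fin 2) ℂ) =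
    (1 : Matrix (Fin 2) (Fin 2) ℚ).map (algebraMap ℚ ℂ) := by
  rw [Matrix.map_one _ (map_zero _) (map_one _)]

lemma neg_one_eq_map : (-1 : Matrix (Fin 2) (Fin 2) ℂ) =
    (-1 : Matrix (Fin 2) (Fin 2) ℚ).map (algebraMap ℚ ℂ) := by
  ext i j
  simp only [Matrix.neg_apply, Matrix.map_apply, Matrix.one_apply]
  split_ifs <;> simp

lemma sign_transfer {α β : ℂ} (hα : IsAlgebraic ℚ α)
    (hβ : Polynomial.aeval β (minpoly ℚ α) = 0) (js : List ℤ)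
    (h : Mlist (List.map (fun k : ℤ => (k : ℂ) * α) js) = 1 ∨
         Mlist (List.map (fun k : ℤ => (k : ℂ) * α) js) = -1) :
    Mlist (List.map (fun k : ℤ => (k : ℂ) * β) js) = 1 ∨
      Mlist (List.map (fun k : ℤ => (k : ℂ) * β) js) = -1 := by
  rw [Mlist_eq] at h ⊢
  rcases h with h | h
  · left
    rw [one_eq_map] at h ⊢
    exact matrix_transfer hα hβ _ _ h
  · right
    rw [neg_one_eq_map] at h ⊢
    exact matrix_transfer hα hβ _ _ h

lemma list_int_rep {w : ℂ} {l : List ℂ} (h : ∀ x ∈ l, x ∈ subgroupGen w) :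
    ∃ js : List ℤ, l = List.map (fun k : ℤ => (k : ℂ) * w) js := by
  induction l with
  | nil => exact ⟨[], rfl⟩
  | cons x t ih =>
    obtain ⟨js, hjs⟩ := ih (fun y hy => h y (List.mem_cons_of_mem _ hy))
    obtain ⟨k, hk⟩ := h x List.mem_cons_self
    exact ⟨k :: js, by simp [hk, hjs]⟩

lemma headI_map (f : ℂ → ℂ) (h0 : f 0 = 0) (l : List ℂ) :
    (l.map f).headI = f l.headI := by
  cases l with
  | nil => simp [List.headI, show (default : ℂ) = 0 from rfl, h0]
  | cons a t => simp

lemma getLastD_map (f : ℂ → ℂ) (h0 : f 0 = 0) (l : List ℂ) :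
    (l.map f).getLastD 0 = f (l.getLastD 0) := by
  suffices H : ∀ (d : ℂ) (l : List ℂ), (l.map f).getLastD (f d) = f (l.getLastD d) by
    have := H 0 l
    rwa [h0] at this
  intro d l
  induction l generalizing d with
  | nil => rfl
  | cons a t ih => simp only [List.map_cons, List.getLastD_cons]; exact ih a

lemma map_oplus (f : ℂ → ℂ) (hadd : ∀ x y, f (x + y) = f x + f y) (h0 : f 0 = 0)
    (a b : List ℂ) : (oplus a b).map f = oplus (a.map f) (b.map f) := by
  simp only [oplus, List.map_cons, List.map_append, List.map_dropLast, List.map_tail,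
    headI_map f h0, getLastD_map f h0, hadd]

lemma map_cyclic (f : ℂ → ℂ) {a b : List ℂ} (h : CyclicEquiv a b) :
    CyclicEquiv (a.map f) (b.map f) := by
  rcases h with ⟨k, rfl⟩ | ⟨k, rfl⟩
  · exact Or.inl ⟨k, List.map_rotate f a k⟩
  · exact Or.inr ⟨k, by rw [List.map_rotate, List.map_reverse]⟩

lemma quid_transfer {α β : ℂ} (hα : IsAlgebraic ℚ α)
    (hβ : Polynomial.aeval β (minpoly ℚ α) = 0) (ks : List ℤ)
    (h : IsQuiddity (subgroupGen α) (List.map (fun k : ℤ => (k : ℂ) * α) ks)) :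
    IsQuiddity (subgroupGen β) (List.map (fun k : ℤ => (k : ℂ) * β) ks) := by
  obtain ⟨h1, h2, h3⟩ := h
  have hks : ks ≠ [] := fun hh => h1 (by simp [hh])
  refine ⟨by simp [hks], ?_, sign_transfer hα hβ ks h3⟩
  intro x hx
  obtain ⟨k, -, rfl⟩ := List.mem_map.1 hx
  exact ⟨k, rfl⟩

lemma conj_symm {α β : ℂ} (hα : IsAlgebraic ℚ α)
    (hβ : Polynomial.aeval β (minpoly ℚ α) = 0) :
    IsAlgebraic ℚ β ∧ Polynomial.aeval α (minpoly ℚ β) = 0 := by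
  have hint : IsIntegral ℚ α := hα.isIntegral
  have halg : IsAlgebraic ℚ β := ⟨minpoly ℚ α, minpoly.ne_zero hint, hβ⟩
  have heq : minpoly ℚ α = minpoly ℚ β :=
    minpoly.eq_of_irreducible_of_monic (minpoly.irreducible hint) hβ (minpoly.monic hint)
  exact ⟨halg, by rw [← heq]; exact minpoly.aeval ℚ α⟩

lemma conj_ne_zero {α β : ℂ} (hα : IsAlgebraic ℚ α)
    (hβ : Polynomial.aeval β (minpoly ℚ α) = 0) (h0 : α ≠ 0) : β ≠ 0 := by
  intro hb
  subst hb
  have hc : (minpoly ℚ α).coeff 0 = 0 := by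
    have h2 : algebraMap ℚ ℂ ((minpoly ℚ α).coeff 0) = 0 := by
      rw [← Polynomial.eval₂_at_zero]; exact hβ
    exact_mod_cast (_root_.map_eq_zero (algebraMap ℚ ℂ)).1 h2
  exact minpoly.coeff_zero_ne_zero hα.isIntegral h0 hc

lemma red_transfer {α β : ℂ} (hα : IsAlgebraic ℚ α)
    (hβ : Polynomial.aeval β (minpoly ℚ α) = 0) (h0 : α ≠ 0) (ks : List ℤ)
    (h : ReducibleQuiddity (subgroupGen α) (List.map (fun k : ℤ => (k : ℂ) * α) ks)) :
    ReducibleQuiddity (subgroupGen β) (List.map (fun k : ℤ => (k : ℂ) * β) ks) := by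
  obtain ⟨a, b, ha, hb, h3a, h3b, hce⟩ := h
  set f : ℂ → ℂ := fun x => (β / α) * x with hf
  have hfk : ∀ k : ℤ, f ((k : ℂ) * α) = (k : ℂ) * β := by
    intro k
    simp only [hf]
    rw [mul_left_comm, div_mul_cancel₀ β h0]
  have hadd : ∀ x y, f (x + y) = f x + f y := fun x y => by simp [hf]; ring
  have hzero : f 0 = 0 := by simp [hf]
  refine ⟨a.map f, b.map f, ?_, ?_, by simpa using h3a, by simpa using h3b, ?_⟩
  · intro x hx
    obtain ⟨y, hy, rfl⟩ := List.mem_map.1 hx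
    obtain ⟨k, rfl⟩ := ha y hy
    exact ⟨k, hfk k⟩
  · obtain ⟨jb, rfl⟩ := list_int_rep hb.2.1
    have heq : (List.map (fun k : ℤ => (k : ℂ) * α) jb).map f =
        List.map (fun k : ℤ => (k : ℂ) * β) jb := by
      rw [List.map_map]; exact List.map_congr_left fun k _ => hfk k
    rw [heq]
    exact quid_transfer hα hβ jb hb
  · have hks : List.map (fun k : ℤ => (k : ℂ) * β) ks =
        (List.map (fun k : ℤ => (k : ℂ) * α) ks).map f := by
      rw [List.map_map]; exact (List.map_congr_left fun k _ => hfk k).symm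
    rw [hks, ← map_oplus f hadd hzero]
    exact map_cyclic f hce

lemma irr_transfer {α β : ℂ} (hα : IsAlgebraic ℚ α)
    (hβ : Polynomial.aeval β (minpoly ℚ α) = 0) (ks : List ℤ)
    (h : IrreducibleQuiddity (subgroupGen α) (List.map (fun k : ℤ => (k : ℂ) * α) ks)) :
    IrreducibleQuiddity (subgroupGen β) (List.map (fun k : ℤ => (k : ℂ) * β) ks) := by
  by_cases h0 : α = 0
  · have hb0 : β = 0 := by
      subst h0
      simpa [minpoly.zero, aeval_X] using hβ
    rw [h0] at h; rw [hb0]; exact h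
  · obtain ⟨hβalg, hαroot⟩ := conj_symm hα hβ
    have hβ0 : β ≠ 0 := conj_ne_zero hα hβ h0
    exact ⟨quid_transfer hα hβ ks h.1, by simpa using h.2.1,
      fun hr => h.2.2 (red_transfer hβalg hαroot hβ0 ks hr)⟩

end Aux

theorem stmt7 (α : ℂ) (hα : IsAlgebraic ℚ α) (β : ℂ)
    (hβ : Polynomial.aeval β (minpoly ℚ α) = 0)
    (ks : List ℤ)
    (h : IsQuiddity (subgroupGen α) (ks.map fun k => (k : ℂ) * α)) :
    IrreducibleQuiddity (subgroupGen α) (ks.map fun k => (k : ℂ) * α) ↔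
      IrreducibleQuiddity (subgroupGen β) (ks.map fun k => (k : ℂ) * β) := by
  obtain ⟨hβalg, hαroot⟩ := conj_symm hα hβ
  rw [coeList α ks, coeList β ks]
  exact ⟨irr_transfer hα hβ ks, irr_transfer hβalg hαroot ks⟩
end
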